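/- Let S be a nonempty set and E = B(S) the Banach space of bounded real functions on S with the sup norm. For every metric functional h ∈ E^◇ (a pointwise limit of a net of functionals x ↦ ‖x − a_α‖ − ‖a_α‖), there exists x ∈ E with h(x) ≠ 0; in fact h(u) = 1 for u ≡ −1 or for u ≡ 1. Hence B(S) has the zero-free property. -/

import Mathlib

open scoped ENNReal

set_option maxHeartbeats 1000000
set_option synthInstance.maxHeartbeats 400000

noncomputable def constLp (S : Type*) [Nonempty S] (c : ℝ) : lp (fun _ : S => ℝ) ∞ :=
  ⟨fun _ => c, memℓp_infty ⟨‖c‖, by rintro x ⟨s, rfl⟩; simp⟩⟩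

lemma constLp_apply (S : Type*) [Nonempty S] (c : ℝ) (s : S) : constLp S c s = c := rfl

lemma constLp_norm (S : Type*) [Nonempty S] (c : ℝ) : ‖constLp S c‖ = ‖c‖ := by
  rw [lp.norm_eq_ciSup]
  have h : ∀ s : S, ‖constLp S c s‖ = ‖c‖ := fun _ => rfl
  simp only [h]
  exact ciSup_const

lemma key (S : Type*) [Nonempty S] (a : lp (fun _ : S => ℝ) ∞) :
    ‖constLp S (-1) - a‖ - ‖a‖ = 1 ∨ ‖constLp S 1 - a‖ - ‖a‖ = 1 := by
  set M := ‖a‖ with hM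
  by_cases h1 : ∀ ε > (0:ℝ), ∃ s : S, a s > M - ε
  · left
    have hub : ‖constLp S (-1) - a‖ ≤ M + 1 := by
      calc ‖constLp S (-1) - a‖ ≤ ‖constLp S (-1)‖ + ‖a‖ := norm_sub_le _ _
        _ = M + 1 := by rw [constLp_norm]; simp [add_comm, hM]
    have hlb : M + 1 ≤ ‖constLp S (-1) - a‖ := by
      refine le_of_forall_pos_le_add fun ε hε => ?_
      obtain ⟨s, hs⟩ := h1 ε hε
      have h2 : ‖(constLp S (-1) - a) s‖ ≤ ‖constLp S (-1) - a‖ :=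
        lp.norm_apply_le_norm ENNReal.top_ne_zero _ s
      have h3 : (constLp S (-1) - a) s = -1 - a s := by
        rw [lp.coeFn_sub]; rfl
      have : a s + 1 ≤ ‖(constLp S (-1) - a) s‖ := by
        rw [h3, Real.norm_eq_abs]
        have := neg_abs_le (-1 - a s)
        linarith [abs_nonneg (-1 - a s)]
      linarith
    linarith [le_antisymm hub hlb]
  · right
    push_neg at h1
    obtain ⟨ε₀, hε₀, hall⟩ := h1
    have hub : ‖constLp S 1 - a‖ ≤ M + 1 := by
      calc ‖constLp S 1 - a‖ ≤ ‖constLp S 1‖ + ‖a‖ := norm_sub_le _ _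
        _ = M + 1 := by rw [constLp_norm]; simp [add_comm, hM]
    have hlb : M + 1 ≤ ‖constLp S 1 - a‖ := by
      refine le_of_forall_pos_le_add fun ε hε => ?_
      set δ := min ε ε₀ with hδ
      have hδpos : 0 < δ := lt_min hε hε₀
      have hMlt : M - δ < ⨆ s, ‖a s‖ := by
        rw [← lp.norm_eq_ciSup]; linarith
      obtain ⟨s, hs⟩ := exists_lt_of_lt_ciSup hMlt
      have hneg : -(a s) > M - δ := by
        rcases abs_choice (a s) with hc | hc
        · exfalso
          have := hall s
          rw [Real.norm_eq_abs, hc] at hs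
          have : δ ≤ ε₀ := min_le_right _ _
          linarith
        · rw [Real.norm_eq_abs, hc] at hs; linarith
      have h2 : ‖(constLp S 1 - a) s‖ ≤ ‖constLp S 1 - a‖ :=
        lp.norm_apply_le_norm ENNReal.top_ne_zero _ s
      have h3 : (constLp S 1 - a) s = 1 - a s := by
        rw [lp.coeFn_sub]; rfl
      have h4 : 1 - a s ≤ ‖(constLp S 1 - a) s‖ := by
        rw [h3, Real.norm_eq_abs]; exact le_abs_self _
      have hδε : δ ≤ ε := min_le_left _ _
      linarith
    linarith [le_antisymm hub hlb]

/-- The space `B(S)` of bounded real functions on a nonempty set `S`, with the sup norm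
(realized as `ℓ∞(S)`), has the zero-free property: every metric functional `h`
(a pointwise limit of functionals `x ↦ ‖x − a‖ − ‖a‖`) satisfies `h(u) = 1` for the
constant function `u ≡ −1` or for `u ≡ 1`; in particular `h` does not vanish
identically. -/
theorem stmt_14 (S : Type*) [Nonempty S]
    (h : lp (fun _ : S => ℝ) ∞ → ℝ)
    (hmem : h ∈ closure (Set.range fun a : lp (fun _ : S => ℝ) ∞ =>
      (fun x : lp (fun _ : S => ℝ) ∞ => ‖x - a‖ - ‖a‖))) :
    ((∀ u : lp (fun _ : S => ℝ) ∞, (∀ s : S, u s = -1) → h u = 1) ∨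
      (∀ u : lp (fun _ : S => ℝ) ∞, (∀ s : S, u s = 1) → h u = 1)) ∧
    (∃ x : lp (fun _ : S => ℝ) ∞, h x ≠ 0) := by
  set C : Set (lp (fun _ : S => ℝ) ∞ → ℝ) :=
    {g | g (constLp S (-1)) = 1} ∪ {g | g (constLp S 1) = 1} with hC
  have hCclosed : IsClosed C := by
    apply IsClosed.union
    · exact isClosed_singleton.preimage (continuous_apply (constLp S (-1)))
    · exact isClosed_singleton.preimage (continuous_apply (constLp S 1))
  have hsub : Set.range (fun a : lp (fun _ : S => ℝ) ∞ =>
      (fun x : lp (fun _ : S => ℝ) ∞ => ‖x - a‖ - ‖a‖)) ⊆ C := by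
    rintro _ ⟨a, rfl⟩
    rcases key S a with hk | hk
    · exact Or.inl hk
    · exact Or.inr hk
  have hhC : h ∈ C := closure_minimal hsub hCclosed hmem
  rcases hhC with hk | hk
  · refine ⟨Or.inl fun u hu => ?_, ⟨constLp S (-1), by rw [hk]; norm_num⟩⟩
    have : u = constLp S (-1) := by
      apply Subtype.ext; funext s; exact hu s
    rw [this]; exact hk
  · refine ⟨Or.inr fun u hu => ?_, ⟨constLp S 1, by rw [hk]; norm_num⟩⟩
    have : u = constLp S 1 := by
      apply Subtype.ext; funext s; exact hu s
    rw [this]; exact hk
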